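/- Let c be a random cluster drawn from the true clustering 𝒞 with probability proportional to positive weights p_c. Then the cluster precision satisfies cP = N·E[CI(c)/p_c] / (|𝒞̂|·E[|c|/p_c]), where CI(c) is the indicator that the block c of 𝒞 is also a block of 𝒞̂. -/

import Mathlib

open Finset Filter Topology

/-- A clustering (partition) of a finite type of records, given by the block
containing each record. -/
structure Clustering (R : Type*) [Fintype R] [DecidableEq R] where
  blk : R → Finset R
  mem_blk : ∀ r, r ∈ blk r
  blk_eq : ∀ r r', r' ∈ blk r → blk r' = blk r

namespace Clustering

variable {R : Type*} [Fintype R] [DecidableEq R]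

/-- The set of clusters (blocks) of the clustering. -/
def clusters (C : Clustering R) : Finset (Finset R) :=
  Finset.univ.image C.blk

/-- The set of unordered pairs of distinct records lying in the same block. -/
def pairs (C : Clustering R) : Set (Sym2 R) :=
  {s | ¬ s.IsDiag ∧ ∀ a b : R, s = s(a, b) → a ∈ C.blk b}

/-- Expectation of `f (c)` when a random cluster `c` is drawn from `C.clusters`
with probability proportional to the positive weights `p`. -/
noncomputable def expect (C : Clustering R) (p : Finset R → ℝ) (f : Finset R → ℝ) : ℝ :=
  ∑ c ∈ C.clusters, (p c / ∑ c' ∈ C.clusters, p c') * f c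

end Clustering

section Metrics

variable {R : Type*} [Fintype R] [DecidableEq R]

/-- Record-wise underclustering error `UCE(r) = |c(r) \ ĉ(r)|`. -/
noncomputable def UCE (C Ch : Clustering R) (r : R) : ℝ := ((C.blk r) \ (Ch.blk r)).card

/-- Record-wise overclustering error `OCE(r) = |ĉ(r) \ c(r)|`. -/
noncomputable def OCE (C Ch : Clustering R) (r : R) : ℝ := ((Ch.blk r) \ (C.blk r)).card

/-- Record-wise size difference error `SDE(r) = |ĉ(r)| - |c(r)|`. -/
noncomputable def SDE (C Ch : Clustering R) (r : R) : ℝ :=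
  ((Ch.blk r).card : ℝ) - ((C.blk r).card : ℝ)

/-- Record-wise relative overclustering error. -/
noncomputable def ROCE (C Ch : Clustering R) (r : R) : ℝ := OCE C Ch r / ((Ch.blk r).card : ℝ)

/-- Record-wise relative underclustering error. -/
noncomputable def RUCE (C Ch : Clustering R) (r : R) : ℝ := UCE C Ch r / ((C.blk r).card : ℝ)

/-- Record-wise error indicator. -/
noncomputable def EI (C Ch : Clustering R) (r : R) : ℝ := if Ch.blk r = C.blk r then 0 else 1

/-- Cluster-wise average of a record-wise error metric:
`E(c) = (1/|c|) ∑_{r ∈ c} E(r)`. -/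
noncomputable def clAvg (E : R → ℝ) (c : Finset R) : ℝ := (1 / (c.card : ℝ)) * ∑ r ∈ c, E r

end Metrics

lemma sum_card_clusters {R : Type*} [Fintype R] [DecidableEq R] (C : Clustering R) :
    ∑ c ∈ C.clusters, c.card = Fintype.card R := by
  classical
  have hdisj : ∀ x ∈ C.clusters, ∀ y ∈ C.clusters, x ≠ y → Disjoint (id x) (id y) := by
    intro x hx y hy hne
    obtain ⟨rx, -, rfl⟩ := Finset.mem_image.mp hx
    obtain ⟨ry, -, rfl⟩ := Finset.mem_image.mp hy
    refine Finset.disjoint_left.mpr fun a ha hb => hne ?_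
    rw [← C.blk_eq rx a ha, ← C.blk_eq ry a hb]
  have hcover : C.clusters.biUnion id = Finset.univ := by
    refine Finset.eq_univ_of_forall fun r => ?_
    exact Finset.mem_biUnion.mpr ⟨C.blk r, Finset.mem_image.mpr ⟨r, Finset.mem_univ r, rfl⟩,
      C.mem_blk r⟩
  have := Finset.card_biUnion hdisj
  rw [hcover, Finset.card_univ] at this
  simpa using this.symm

/-- Lemma 3 (cluster precision part). -/
theorem cluster_precision_representation
    {R : Type*} [Fintype R] [DecidableEq R]
    (C Ch : Clustering R) (p : Finset R → ℝ)
    (hp : ∀ c ∈ C.clusters, 0 < p c) :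
    ((C.clusters ∩ Ch.clusters).card : ℝ) / (Ch.clusters.card : ℝ) =
      (Fintype.card R : ℝ) *
          C.expect p (fun c => (if c ∈ Ch.clusters then (1 : ℝ) else 0) / p c) /
        ((Ch.clusters.card : ℝ) * C.expect p (fun c => (c.card : ℝ) / p c)) := by
  classical
  by_cases hE : IsEmpty R
  · have h1 : C.clusters = ∅ := by simp [Clustering.clusters, Finset.univ_eq_empty]
    have h2 : Ch.clusters = ∅ := by simp [Clustering.clusters, Finset.univ_eq_empty]
    simp [h1, h2, Clustering.expect]
  · have : Nonempty R := not_isEmpty_iff.mp hE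
    set S := ∑ c' ∈ C.clusters, p c' with hS
    have hSpos : 0 < S := Finset.sum_pos hp (by
      obtain ⟨r⟩ := ‹Nonempty R›
      exact ⟨C.blk r, Finset.mem_image.mpr ⟨r, Finset.mem_univ r, rfl⟩⟩)
    have hE1 : C.expect p (fun c => (if c ∈ Ch.clusters then (1 : ℝ) else 0) / p c)
        = ((C.clusters ∩ Ch.clusters).card : ℝ) / S := by
      unfold Clustering.expect
      rw [← hS]
      have : ∀ c ∈ C.clusters,
          p c / S * ((if c ∈ Ch.clusters then (1 : ℝ) else 0) / p c)
          = (if c ∈ Ch.clusters then (1 : ℝ) else 0) / S := by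
        intro c hc
        have hpc := (hp c hc).ne'
        field_simp
      rw [Finset.sum_congr rfl this, ← Finset.sum_div]
      congr 1
      simp [Finset.sum_boole, Finset.filter_mem_eq_inter]
    have hE2 : C.expect p (fun c => (c.card : ℝ) / p c)
        = (Fintype.card R : ℝ) / S := by
      unfold Clustering.expect
      rw [← hS]
      have : ∀ c ∈ C.clusters,
          p c / S * ((c.card : ℝ) / p c) = (c.card : ℝ) / S := by
        intro c hc
        have hpc := (hp c hc).ne'
        field_simp
      rw [Finset.sum_congr rfl this, ← Finset.sum_div]
      congr 1
      rw [← Nat.cast_sum, sum_card_clusters]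
    rw [hE1, hE2]
    have hN : (0 : ℝ) < (Fintype.card R : ℝ) := by
      exact_mod_cast Fintype.card_pos
    have hCh : (0 : ℝ) < (Ch.clusters.card : ℝ) := by
      have : Ch.clusters.Nonempty := by
        obtain ⟨r⟩ := ‹Nonempty R›
        exact ⟨Ch.blk r, Finset.mem_image.mpr ⟨r, Finset.mem_univ r, rfl⟩⟩
      exact_mod_cast Finset.card_pos.mpr this
    field_simp
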